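/- If λ and μ are binary partitions of the same integer n ≥ 0, then pre_2(λ) = pre_2(μ) if and only if λ = μ. Here pre_2(ν) is the multiset of pairwise products of distinct-index parts of ν. -/

import Mathlib

open Finset

/-- `pre₂(λ)`: the multiset of pairwise products `λ_i * λ_j` (over pairs of distinct
indices `i < j`) of the parts of the partition `λ`. -/
def pre2 {n : ℕ} (π : Nat.Partition n) : Multiset ℕ :=
  (π.parts.powersetCard 2).map Multiset.prod

lemma sq_sum_multiset (m : Multiset ℕ) :
    m.sum ^ 2 = 2 * ((m.powersetCard 2).map Multiset.prod).sum + (m.map (· ^ 2)).sum := by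
  induction m using Multiset.induction with
  | empty => simp [Multiset.powersetCard_zero_right]
  | cons a m ih =>
    have h1 : ((m.powersetCard 1).map (Multiset.cons a)).map Multiset.prod
        = m.map (a * ·) := by
      rw [Multiset.powersetCard_one, Multiset.map_map, Multiset.map_map]
      simp [Function.comp_def]
    simp only [Multiset.powersetCard_cons, Multiset.sum_cons, Multiset.map_cons,
      Multiset.map_add, Multiset.sum_add, h1]
    have h2 : (m.map (a * ·)).sum = a * m.sum := by
      simpa using Multiset.sum_map_mul_left (s := m) (a := a) (f := id)
    rw [h2, add_sq, ih]
    ring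

lemma pre2sum_sq (m : Multiset ℕ) :
    ((m.map (· ^ 2)).powersetCard 2).map Multiset.prod
      = ((m.powersetCard 2).map Multiset.prod).map (· ^ 2) := by
  rw [Multiset.powersetCard_map, Multiset.map_map, Multiset.map_map]
  apply Multiset.map_congr rfl
  intro s _
  show (s.map (· ^ 2)).prod = s.prod ^ 2
  have := Multiset.prod_map_pow (m := s) (f := id) (n := 2)
  simpa using this

lemma eval_pow_sum (A : Multiset ℕ) (x : ℤ) :
    Polynomial.eval x ((A.map fun a => (Polynomial.X : Polynomial ℤ) ^ a).sum)
      = (A.map fun a => x ^ a).sum := by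
  induction A using Multiset.induction with
  | empty => simp
  | cons a A ih => simp [ih]

lemma coeff_pow_sum (A : Multiset ℕ) (c : ℕ) :
    ((A.map fun a => (Polynomial.X : Polynomial ℤ) ^ a).sum).coeff c = A.count c := by
  induction A using Multiset.induction with
  | empty => simp
  | cons a A ih =>
    simp only [Multiset.map_cons, Multiset.sum_cons, Polynomial.coeff_add, ih,
      Polynomial.coeff_X_pow, Multiset.count_cons]
    split_ifs <;> push_cast <;> ring

theorem pre2_injective_on_binary {n : ℕ} (π μ : Nat.Partition n)
    (hπ : ∀ i ∈ π.parts, ∃ k : ℕ, i = 2 ^ k) (hμ : ∀ i ∈ μ.parts, ∃ k : ℕ, i = 2 ^ k) :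
    pre2 π = pre2 μ ↔ π = μ := by
  constructor
  · intro h
    have key : ∀ k : ℕ,
        ((π.parts.map (· ^ 2 ^ k)).powersetCard 2).map Multiset.prod
          = ((μ.parts.map (· ^ 2 ^ k)).powersetCard 2).map Multiset.prod
        ∧ (π.parts.map (· ^ 2 ^ k)).sum = (μ.parts.map (· ^ 2 ^ k)).sum := by
      intro k
      induction k with
      | zero =>
        simp only [pow_zero, pow_one, Multiset.map_id']
        exact ⟨h, by rw [π.parts_sum, μ.parts_sum]⟩
      | succ k ih =>
        have hmap : ∀ m : Multiset ℕ,
            m.map (· ^ 2 ^ (k + 1)) = (m.map (· ^ 2 ^ k)).map (· ^ 2) := by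
          intro m
          rw [Multiset.map_map]
          apply Multiset.map_congr rfl
          intro x _
          show x ^ 2 ^ (k+1) = (x ^ 2 ^ k) ^ 2
          rw [← pow_mul, pow_succ]
        rw [hmap π.parts, hmap μ.parts]
        refine ⟨?_, ?_⟩
        · rw [pre2sum_sq, pre2sum_sq, ih.1]
        · have h1 := sq_sum_multiset (π.parts.map (· ^ 2 ^ k))
          have h2 := sq_sum_multiset (μ.parts.map (· ^ 2 ^ k))
          rw [ih.1, ih.2] at h1
          omega
    -- exponent multisets
    set A := π.parts.map (Nat.log 2) with hAdef
    set B := μ.parts.map (Nat.log 2) with hBdef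
    have hrecover : ∀ (m : Multiset ℕ), (∀ i ∈ m, ∃ k : ℕ, i = 2 ^ k) →
        m = (m.map (Nat.log 2)).map ((2:ℕ) ^ ·) := by
      intro m hm
      rw [Multiset.map_map]
      conv_lhs => rw [← Multiset.map_id m]
      apply Multiset.map_congr rfl
      intro p hp
      obtain ⟨k, hk⟩ := hm p hp
      simp [hk, Nat.log_pow one_lt_two]
    have hA : π.parts = A.map ((2:ℕ) ^ ·) := hrecover _ hπ
    have hB : μ.parts = B.map ((2:ℕ) ^ ·) := hrecover _ hμ
    -- power-sum equality translated to exponents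
    have hpow : ∀ k : ℕ, (A.map fun a => ((2:ℤ) ^ 2 ^ k) ^ a).sum
        = (B.map fun a => ((2:ℤ) ^ 2 ^ k) ^ a).sum := by
      intro k
      have hnat : ∀ (m : Multiset ℕ) (hm : ∀ i ∈ m, ∃ j : ℕ, i = 2 ^ j),
          m.map (· ^ 2 ^ k) = (m.map (Nat.log 2)).map fun a => ((2:ℕ) ^ 2 ^ k) ^ a := by
        intro m hm
        conv_lhs => rw [hrecover m hm]
        simp only [Multiset.map_map]
        apply Multiset.map_congr rfl
        intro p _
        show ((2:ℕ) ^ Nat.log 2 p) ^ 2 ^ k = ((2:ℕ) ^ 2 ^ k) ^ Nat.log 2 p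
        rw [← pow_mul, ← pow_mul, Nat.mul_comm]
      have h2 := (key k).2
      rw [hnat π.parts hπ, hnat μ.parts hμ] at h2
      have hcast : ∀ (C : Multiset ℕ),
          ((C.map fun a => ((2:ℕ) ^ 2 ^ k) ^ a).sum : ℤ)
            = (C.map fun a => ((2:ℤ) ^ 2 ^ k) ^ a).sum := by
        intro C
        induction C using Multiset.induction with
        | empty => simp
        | cons a C ih => simp [ih]
      rw [← hcast, ← hcast, hAdef, hBdef]
      exact_mod_cast congrArg (Nat.cast : ℕ → ℤ) h2
    -- polynomial argument
    set P : Polynomial ℤ := (A.map fun a => (Polynomial.X : Polynomial ℤ) ^ a).sum with hP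
    set Q : Polynomial ℤ := (B.map fun a => (Polynomial.X : Polynomial ℤ) ^ a).sum with hQ
    have hPQ : P - Q = 0 := by
      apply Polynomial.eq_zero_of_infinite_isRoot
      have hsub : Set.range (fun k : ℕ => (2:ℤ) ^ 2 ^ k) ⊆ {x | (P - Q).IsRoot x} := by
        rintro x ⟨k, rfl⟩
        simp only [Set.mem_setOf_eq, Polynomial.IsRoot, Polynomial.eval_sub, hP, hQ,
          eval_pow_sum, hpow k, sub_self]
      have hinj : Function.Injective (fun k : ℕ => (2:ℤ) ^ 2 ^ k) := by
        have hsm : StrictMono (fun k : ℕ => (2:ℤ) ^ 2 ^ k) := by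
          intro i j hij
          exact pow_lt_pow_right₀ one_lt_two (Nat.pow_lt_pow_right one_lt_two hij)
        exact hsm.injective
      exact (Set.infinite_range_of_injective hinj).mono hsub
    have hABeq : A = B := by
      have hPQ' : P = Q := by linear_combination hPQ
      ext c
      have := congrArg (fun p => Polynomial.coeff p c) hPQ'
      simp only [hP, hQ, coeff_pow_sum] at this
      exact_mod_cast this
    have : π.parts = μ.parts := by rw [hA, hB, hABeq]
    exact Nat.Partition.ext this
  · intro h
    rw [h]
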